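/- On the region {(M, Λ) : M > 0, Λ > 0, 9ΛM² < 1}, define Ω_ph(M, Λ) := √(1 − 9ΛM²)/(3√3·M), c_Z(M, Λ) := (2 + 9ΛM²)/(27M²), and Δc(M, Λ) := −5√3·√(1 − 9ΛM²)/(162·M³). Then, at every point of this region, the partial derivatives of these functions satisfy the identity −(∂Δc/∂M)·c_Z·(∂Ω_ph/∂Λ) + (∂Δc/∂Λ)·c_Z·(∂Ω_ph/∂M) − 2·Δc·((∂Ω_ph/∂M)·(∂c_Z/∂Λ) − (∂Ω_ph/∂Λ)·(∂c_Z/∂M)) = 5·(9ΛM² − 4)/(1458·M⁵). -/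

import Mathlib

/-- The photon-sphere angular velocity `Ω_ph(M, Λ) = √(1 - 9ΛM²)/(3√3·M)`. -/
noncomputable def Ωph (M Λ : ℝ) : ℝ :=
  Real.sqrt (1 - 9 * Λ * M ^ 2) / (3 * Real.sqrt 3 * M)

/-- The linear Zeeman splitting coefficient `c_Z(M, Λ) = (2 + 9ΛM²)/(27M²)`. -/
noncomputable def cZ (M Λ : ℝ) : ℝ := (2 + 9 * Λ * M ^ 2) / (27 * M ^ 2)

/-- `Δc(M, Λ) = -5√3·√(1 - 9ΛM²)/(162M³)`, the difference of the second-order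
rotation coefficients of the equatorial Lyapunov exponent and orbital frequency. -/
noncomputable def Δc (M Λ : ℝ) : ℝ :=
  -5 * Real.sqrt 3 * Real.sqrt (1 - 9 * Λ * M ^ 2) / (162 * M ^ 3)

/-- on the region `M > 0`, `Λ > 0`, `9ΛM² < 1`, the identity
`-(∂_M Δc)·c_Z·(∂_Λ Ω_ph) + (∂_Λ Δc)·c_Z·(∂_M Ω_ph)
  - 2Δc·((∂_M Ω_ph)(∂_Λ c_Z) - (∂_Λ Ω_ph)(∂_M c_Z)) = 5(9ΛM² - 4)/(1458M⁵)`
holds, where `∂_M`, `∂_Λ` denote the partial derivatives in `M` and `Λ`. -/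
theorem stmt_12 (M Λ : ℝ) (hM : 0 < M) (hΛ : 0 < Λ) (hsub : 9 * Λ * M ^ 2 < 1) :
    -(deriv (fun M' => Δc M' Λ) M) * cZ M Λ * (deriv (fun Λ' => Ωph M Λ') Λ) +
      (deriv (fun Λ' => Δc M Λ') Λ) * cZ M Λ * (deriv (fun M' => Ωph M' Λ) M) -
      2 * Δc M Λ *
        ((deriv (fun M' => Ωph M' Λ) M) * (deriv (fun Λ' => cZ M Λ') Λ) -
          (deriv (fun Λ' => Ωph M Λ') Λ) * (deriv (fun M' => cZ M' Λ) M)) =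
      5 * (9 * Λ * M ^ 2 - 4) / (1458 * M ^ 5) := by
  have hM0 : M ≠ 0 := ne_of_gt hM
  have hpos : 0 < 1 - 9 * Λ * M ^ 2 := by linarith
  set s : ℝ := Real.sqrt (1 - 9 * Λ * M ^ 2) with hs_def
  set t : ℝ := Real.sqrt 3 with ht_def
  have hs0 : s ≠ 0 := ne_of_gt (Real.sqrt_pos.2 hpos)
  have ht0 : t ≠ 0 := ne_of_gt (Real.sqrt_pos.2 (by norm_num))
  have hs2 : s * s = 1 - 9 * Λ * M ^ 2 := Real.mul_self_sqrt hpos.le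
  have ht2 : t * t = 3 := Real.mul_self_sqrt (by norm_num)
  -- inner derivatives
  have hinM : HasDerivAt (fun M' : ℝ => 1 - 9 * Λ * M' ^ 2) (-(9 * Λ * (2 * M))) M := by
    have := ((hasDerivAt_pow 2 M).const_mul (9 * Λ)).const_sub 1
    simpa using this
  have hinΛ : HasDerivAt (fun Λ' : ℝ => 1 - 9 * Λ' * M ^ 2) (-(9 * M ^ 2)) Λ := by
    have := ((hasDerivAt_id Λ).const_mul 9).mul_const (M ^ 2) |>.const_sub 1
    simpa using this
  have hsM : HasDerivAt (fun M' : ℝ => Real.sqrt (1 - 9 * Λ * M' ^ 2))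
      (-(9 * Λ * (2 * M)) / (2 * s)) M := hinM.sqrt (ne_of_gt hpos)
  have hsΛ : HasDerivAt (fun Λ' : ℝ => Real.sqrt (1 - 9 * Λ' * M ^ 2))
      (-(9 * M ^ 2) / (2 * s)) Λ := hinΛ.sqrt (ne_of_gt hpos)
  -- Ωph derivatives
  have hΩM : HasDerivAt (fun M' : ℝ => Ωph M' Λ)
      ((-(9 * Λ * (2 * M)) / (2 * s) * (3 * t * M) - s * (3 * t)) / (3 * t * M) ^ 2) M := by
    unfold Ωph
    exact hsM.div (by simpa using (hasDerivAt_id M).const_mul (3 * t))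
      (mul_ne_zero (mul_ne_zero (by norm_num) ht0) hM0)
  have hΩΛ : HasDerivAt (fun Λ' : ℝ => Ωph M Λ')
      (-(9 * M ^ 2) / (2 * s) / (3 * t * M)) Λ := by
    unfold Ωph
    exact hsΛ.div_const _
  -- cZ derivatives
  have hcM : HasDerivAt (fun M' : ℝ => cZ M' Λ)
      ((9 * Λ * (2 * M) * (27 * M ^ 2) - (2 + 9 * Λ * M ^ 2) * (27 * (2 * M))) /
        (27 * M ^ 2) ^ 2) M := by
    unfold cZ
    have h1 : HasDerivAt (fun M' : ℝ => 2 + 9 * Λ * M' ^ 2) (9 * Λ * (2 * M)) M := by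
      have := ((hasDerivAt_pow 2 M).const_mul (9 * Λ)).const_add 2
      simpa using this
    have h2 : HasDerivAt (fun M' : ℝ => 27 * M' ^ 2) (27 * (2 * M)) M := by
      have := (hasDerivAt_pow 2 M).const_mul 27
      simpa using this
    exact h1.div h2 (by positivity)
  have hcΛ : HasDerivAt (fun Λ' : ℝ => cZ M Λ') (9 * M ^ 2 / (27 * M ^ 2)) Λ := by
    unfold cZ
    have h1 : HasDerivAt (fun Λ' : ℝ => 2 + 9 * Λ' * M ^ 2) (9 * M ^ 2) Λ := by
      have := (((hasDerivAt_id Λ).const_mul 9).mul_const (M ^ 2)).const_add 2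
      simpa using this
    exact h1.div_const _
  -- Δc derivatives
  have hΔM : HasDerivAt (fun M' : ℝ => Δc M' Λ)
      ((-5 * t * (-(9 * Λ * (2 * M)) / (2 * s)) * (162 * M ^ 3) -
        -5 * t * s * (162 * (3 * M ^ 2))) / (162 * M ^ 3) ^ 2) M := by
    unfold Δc
    have h1 : HasDerivAt (fun M' : ℝ => -5 * t * Real.sqrt (1 - 9 * Λ * M' ^ 2))
        (-5 * t * (-(9 * Λ * (2 * M)) / (2 * s))) M := by
      simpa [mul_comm] using hsM.const_mul (-5 * t)
    have h2 : HasDerivAt (fun M' : ℝ => 162 * M' ^ 3) (162 * (3 * M ^ 2)) M := by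
      have := (hasDerivAt_pow 3 M).const_mul 162
      simpa using this
    exact h1.div h2 (by positivity)
  have hΔΛ : HasDerivAt (fun Λ' : ℝ => Δc M Λ')
      (-5 * t * (-(9 * M ^ 2) / (2 * s)) / (162 * M ^ 3)) Λ := by
    unfold Δc
    have h1 : HasDerivAt (fun Λ' : ℝ => -5 * t * Real.sqrt (1 - 9 * Λ' * M ^ 2))
        (-5 * t * (-(9 * M ^ 2) / (2 * s))) Λ := by
      simpa [mul_comm] using hsΛ.const_mul (-5 * t)
    exact h1.div_const _
  rw [hΩM.deriv, hΩΛ.deriv, hcM.deriv, hcΛ.deriv, hΔM.deriv, hΔΛ.deriv]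
  unfold cZ Δc
  rw [← hs_def, ← ht_def]
  field_simp
  have h1 : s ^ 8 * t ^ 6 * M ^ 28 = s ^ 6 * t ^ 6 * M ^ 28 * (1 - 9 * Λ * M ^ 2) := by
    rw [← hs2]; ring
  ring_nf
  linear_combination (-52488) * s ^ 2 * hs2
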